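/- Suppose the player set ι and every action set A i are finite. Then there is no infinite sequence of strategy profiles a : ℕ → (Π i, A i) such that for every n, a n ∈ F, there is a player i_n with a (n+1) j = a n j for all j ≠ i_n, and U i_n (a (n+1)) > U i_n (a n). That is, the game satisfies the finite improvement property: every strict feasible-improvement path terminates after finitely many steps. -/
import Mathlib


/-- The marginal-contribution utility of player `i` at profile `a`, given the
potential function `Φ` and null actions `ν`. -/
def marginalUtility {ι : Type*} [DecidableEq ι] {A : ι → Type*}
    (Φ : (∀ i, A i) → ℝ) (ν : ∀ i, A i) (i : ι) (a : ∀ i, A i) : ℝ :=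
  Φ a - Φ (Function.update a i (ν i))

/-- Finite improvement property: with finitely many players and finite action
sets, there is no infinite strict feasible-improvement path, i.e. no sequence of
profiles in `F` in which every step is a strict unilateral utility improvement
by some player. -/
theorem finite_improvement_property
    {ι : Type*} [Fintype ι] [DecidableEq ι] {A : ι → Type*}
    [∀ i, Fintype (A i)] [∀ i, Nonempty (A i)]
    (Φ : (∀ i, A i) → ℝ) (ν : ∀ i, A i) (F : Set (∀ i, A i)) :
    ¬ ∃ a : ℕ → (∀ i, A i),
        ∀ n : ℕ, a n ∈ F ∧
          ∃ i : ι, (∀ j, j ≠ i → a (n + 1) j = a n j) ∧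
            marginalUtility Φ ν i (a n) < marginalUtility Φ ν i (a (n + 1)) := by
  rintro ⟨a, ha⟩
  have hmono : StrictMono (fun n => Φ (a n)) := by
    apply strictMono_nat_of_lt_succ
    intro n
    obtain ⟨_, i, hoff, hlt⟩ := ha n
    have hup : Function.update (a (n+1)) i (ν i) = Function.update (a n) i (ν i) := by
      funext j
      by_cases hj : j = i
      · subst hj; simp
      · simp [Function.update_of_ne hj, hoff j hj]
    simp only [marginalUtility, hup] at hlt
    linarith
  have : Function.Injective a := fun m n h => hmono.injective (by simp [h])
  exact (Finite.of_injective a this).false
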